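/- Let S = {s_1, …, s_t} be a finite set of integers with t ≥ 3, 1 < s_1 < s_2 < … < s_t, and gcd(s_1, …, s_t) = 1. Then every representable integer k with 0 < k < s_3 + s_1 + 2 satisfies MinCost_S(k) = GreedyCost_S(k); that is, there is no counterexample below s_3 + s_1 + 2. -/

import Mathlib

open Finset

/-- `a` is a representation of `k` with respect to the denominations `s`:
a vector of nonnegative integers with `∑ i, a i * s i = k`. -/
def IsRep {t : ℕ} (s : Fin t → ℕ) (k : ℕ) (a : Fin t → ℕ) : Prop :=
  ∑ i, a i * s i = k

/-- `k` is representable with respect to `s`. -/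
def Representable {t : ℕ} (s : Fin t → ℕ) (k : ℕ) : Prop :=
  ∃ a, IsRep s k a

/-- `MinCost_S(k)`: the minimum cost `∑ i, a i` over all representations `a` of `k`. -/
noncomputable def minCost {t : ℕ} (s : Fin t → ℕ) (k : ℕ) : ℕ :=
  sInf {c | ∃ a, IsRep s k a ∧ ∑ i, a i = c}

/-- `a` is the greedy representation of `k`: the representation whose reversed vector
`(a_t, …, a_1)` is greatest in lexicographic order among the reversed vectors of all
representations of `k`. -/
def IsGreedyRep {t : ℕ} (s : Fin t → ℕ) (k : ℕ) (a : Fin t → ℕ) : Prop :=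
  IsRep s k a ∧
    ∀ b, IsRep s k b → b = a ∨ ∃ i, b i < a i ∧ ∀ j, i < j → b j = a j

/-- `GreedyCost_S(k)`: the cost of the greedy representation of `k`
(the greedy representation is unique when it exists). -/
noncomputable def greedyCost {t : ℕ} (s : Fin t → ℕ) (k : ℕ) : ℕ :=
  sInf {c | ∃ a, IsGreedyRep s k a ∧ ∑ i, a i = c}

/-- The final remainder `r_0` of the naive greedy algorithm: for `i = t` down to `1`,
replace the current remainder `r` by `r % s_i`. -/
def greedyRem {t : ℕ} (s : Fin t → ℕ) (k : ℕ) : ℕ :=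
  ((List.ofFn s).reverse).foldl (· % ·) k

/-- A counterexample for `S`: a representable `k > 0` with `MinCost_S(k) < GreedyCost_S(k)`. -/
def IsCounterexample {t : ℕ} (s : Fin t → ℕ) (k : ℕ) : Prop :=
  0 < k ∧ Representable s k ∧ minCost s k < greedyCost s k

/-- A witness for `S`: a representable `k > 0` such that for some generator `s i` with
`k - s i` nonnegative and representable, `GreedyCost_S(k) > GreedyCost_S(k - s i) + 1`. -/
def IsWitness {t : ℕ} (s : Fin t → ℕ) (k : ℕ) : Prop :=
  0 < k ∧ Representable s k ∧ ∃ i : Fin t, s i ≤ k ∧ Representable s (k - s i) ∧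
    greedyCost s (k - s i) + 1 < greedyCost s k


private lemma aux_sum_split {t : ℕ} (i : Fin t) (f : Fin t → ℕ) :
    ∑ j, f j = (∑ j ∈ univ.filter (fun j => j < i), f j) + f i
      + ∑ j ∈ univ.filter (fun j => i < j), f j := by
  classical
  rw [← Finset.sum_filter_add_sum_filter_not univ (fun j => j < i) f]
  have h : univ.filter (fun j => ¬ j < i) = insert i (univ.filter (fun j => i < j)) := by
    ext j
    simp only [mem_filter, mem_univ, true_and, mem_insert, not_lt, Fin.le_def, Fin.lt_def]
    constructor
    · intro h
      rcases Nat.eq_or_lt_of_le h with h | h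
      · exact Or.inl (Fin.ext h.symm)
      · exact Or.inr h
    · rintro (rfl | h) <;> omega
  rw [h, Finset.sum_insert (by simp)]
  omega

private lemma aux_geom_sum_nat (k : ℕ) : ∀ n, ∑ j ∈ Finset.range n, k * (k+1)^j = (k+1)^n - 1 := by
  intro n
  induction n with
  | zero => simp
  | succ n ih =>
    have h1 : 1 ≤ (k+1)^n := Nat.one_le_pow _ _ (by omega)
    have h2 : (k+1)^(n+1) = (k+1)^n + k * (k+1)^n := by ring
    rw [Finset.sum_range_succ, ih]
    generalize k * (k+1)^n = c at h2 ⊢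
    omega

private lemma aux_sum_filter_lt_fin {t : ℕ} (i : Fin t) (f : ℕ → ℕ) :
    ∑ j ∈ univ.filter (fun j => j < i), f j.val = ∑ m ∈ Finset.range i.val, f m := by
  classical
  rw [Finset.sum_filter]
  have h1 : (∑ a : Fin t, if a < i then f a.val else 0)
      = ∑ a : Fin t, (fun m : ℕ => if m < (i:ℕ) then f m else 0) a.val := by
    apply Finset.sum_congr rfl
    intro a _
    simp only [Fin.lt_def]
  have h2 := Fin.sum_univ_eq_sum_range (fun m : ℕ => if m < (i:ℕ) then f m else 0) t
  rw [h1, h2]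
  rw [← Finset.sum_subset (Finset.range_subset_range.mpr i.isLt.le)
    (fun x _ hx => by simp_all [Finset.mem_range])]
  apply Finset.sum_congr rfl
  intro x hx
  simp [Finset.mem_range.mp hx]

private lemma aux_enc_lt {t k : ℕ} (a b : Fin t → ℕ) (ha : ∀ j, a j ≤ k) (i : Fin t)
    (hib : a i < b i) (hupper : ∀ j, i < j → a j = b j) :
    ∑ j, a j * (k+1)^(j:ℕ) < ∑ j, b j * (k+1)^(j:ℕ) := by
  rw [aux_sum_split i (fun j => a j * (k+1)^(j:ℕ)), aux_sum_split i (fun j => b j * (k+1)^(j:ℕ))]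
  have hU : (∑ j ∈ univ.filter (fun j => i < j), a j * (k+1)^(j:ℕ))
      = ∑ j ∈ univ.filter (fun j => i < j), b j * (k+1)^(j:ℕ) := by
    apply Finset.sum_congr rfl
    intro j hj
    rw [hupper j (mem_filter.mp hj).2]
  have hLa : (∑ j ∈ univ.filter (fun j => j < i), a j * (k+1)^(j:ℕ)) ≤ (k+1)^(i:ℕ) - 1 := by
    calc (∑ j ∈ univ.filter (fun j => j < i), a j * (k+1)^(j:ℕ))
        ≤ ∑ j ∈ univ.filter (fun j => j < i), k * (k+1)^(j:ℕ) :=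
          Finset.sum_le_sum (fun j _ => Nat.mul_le_mul_right _ (ha j))
      _ = ∑ m ∈ Finset.range i.val, k * (k+1)^m := aux_sum_filter_lt_fin i (fun m => k * (k+1)^m)
      _ = (k+1)^(i:ℕ) - 1 := aux_geom_sum_nat k i.val
  have hpow : 1 ≤ (k+1)^(i:ℕ) := Nat.one_le_pow _ _ (by omega)
  have hkey : a i * (k+1)^(i:ℕ) + (k+1)^(i:ℕ) ≤ b i * (k+1)^(i:ℕ) := by
    calc a i * (k+1)^(i:ℕ) + (k+1)^(i:ℕ) = (a i + 1) * (k+1)^(i:ℕ) := by ring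
      _ ≤ b i * (k+1)^(i:ℕ) := Nat.mul_le_mul_right _ hib
  rw [hU]
  generalize (∑ j ∈ univ.filter (fun j => j < i), a j * (k+1)^(j:ℕ)) = La at *
  generalize (∑ j ∈ univ.filter (fun j => j < i), b j * (k+1)^(j:ℕ)) = Lb at *
  generalize a i * (k+1)^(i:ℕ) = x at *
  generalize b i * (k+1)^(i:ℕ) = y at *
  generalize (k+1)^(i:ℕ) = P at *
  omega

private lemma aux_rep_entry_le {t : ℕ} {s : Fin t → ℕ} (hs : ∀ i, 0 < s i) {k : ℕ}
    {a : Fin t → ℕ} (ha : IsRep s k a) (j : Fin t) : a j ≤ k := by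
  have h1 : a j * s j ≤ k := by
    rw [← ha]
    exact Finset.single_le_sum (f := fun j => a j * s j) (fun _ _ => Nat.zero_le _) (mem_univ j)
  calc a j = a j * 1 := by ring
    _ ≤ a j * s j := Nat.mul_le_mul_left _ (hs j)
    _ ≤ k := h1

private lemma aux_exists_greedyRep {t : ℕ} (s : Fin t → ℕ) (hs : ∀ i, 0 < s i) {k : ℕ}
    (hrep : Representable s k) : ∃ g, IsGreedyRep s k g := by
  classical
  obtain ⟨a0, ha0⟩ := hrep
  set E : Set ℕ := {n | ∃ a, IsRep s k a ∧ ∑ j, a j * (k+1)^(j:ℕ) = n} with hE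
  have hne : E.Nonempty := ⟨_, a0, ha0, rfl⟩
  have hbdd : BddAbove E := by
    refine ⟨∑ j : Fin t, k * (k+1)^(j:ℕ), ?_⟩
    rintro n ⟨a, ha, rfl⟩
    exact Finset.sum_le_sum (fun j _ => Nat.mul_le_mul_right _ (aux_rep_entry_le hs ha j))
  obtain ⟨g, hg, hgenc⟩ := Nat.sSup_mem hne hbdd
  refine ⟨g, hg, ?_⟩
  intro b hb
  by_cases hbg : b = g
  · exact Or.inl hbg
  right
  have hD : (univ.filter (fun i => b i ≠ g i)).Nonempty := by
    obtain ⟨i, hi⟩ := Function.ne_iff.mp hbg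
    exact ⟨i, by simp [hi]⟩
  set i := (univ.filter fun i => b i ≠ g i).max' hD with hidef
  have hi : b i ≠ g i := (mem_filter.mp ((univ.filter fun i => b i ≠ g i).max'_mem hD)).2
  have hupper : ∀ j, i < j → b j = g j := by
    intro j hj
    by_contra h
    exact absurd (Finset.le_max' _ j (by simp [h])) (not_le.mpr hj)
  rcases lt_or_gt_of_ne hi with h | h
  · exact ⟨i, h, hupper⟩
  · exfalso
    have hlt := aux_enc_lt g b (fun j => aux_rep_entry_le hs hg j) i h
      (fun j hj => (hupper j hj).symm)
    have hle : (∑ j, b j * (k+1)^(j:ℕ)) ≤ sSup E := le_csSup hbdd ⟨b, hb, rfl⟩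
    omega

private lemma aux_greedy_le_of_rep {t : ℕ} (s : Fin t → ℕ) (hmono : StrictMono s)
    (i0 i1 i2 : Fin t) (h0 : (i0 : ℕ) = 0) (h1 : (i1 : ℕ) = 1) (h2 : (i2 : ℕ) = 2)
    (hone : 1 < s i0) {k : ℕ} (hlt : k < s i2 + s i0 + 2)
    {g b : Fin t → ℕ} (hg : IsGreedyRep s k g) (hb : IsRep s k b) :
    ∑ j, g j ≤ ∑ j, b j := by
  rcases hg.2 b hb with rfl | ⟨i, hbi, hupper⟩
  · exact le_refl _
  have hs0 : ∀ j, s i0 ≤ s j := fun j => hmono.monotone (by simp [Fin.le_def, h0])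
  have hs2 : s i0 + 2 ≤ s i2 := by
    have h01 : s i0 < s i1 := hmono (by simp [Fin.lt_def, h0, h1])
    have h12 : s i1 < s i2 := hmono (by simp [Fin.lt_def, h1, h2])
    omega
  have hvg := aux_sum_split i (fun j => g j * s j)
  have hvb := aux_sum_split i (fun j => b j * s j)
  have hcg := aux_sum_split i g
  have hcb := aux_sum_split i b
  have hUv : (∑ j ∈ univ.filter (fun j => i < j), b j * s j)
      = ∑ j ∈ univ.filter (fun j => i < j), g j * s j :=
    Finset.sum_congr rfl (fun j hj => by rw [hupper j (mem_filter.mp hj).2])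
  have hUc : (∑ j ∈ univ.filter (fun j => i < j), b j)
      = ∑ j ∈ univ.filter (fun j => i < j), g j :=
    Finset.sum_congr rfl (fun j hj => hupper j (mem_filter.mp hj).2)
  set Lg := ∑ j ∈ univ.filter (fun j => j < i), g j * s j with hLg
  set Lb := ∑ j ∈ univ.filter (fun j => j < i), b j * s j with hLb
  set Sg := ∑ j ∈ univ.filter (fun j => j < i), g j with hSg
  set Sb := ∑ j ∈ univ.filter (fun j => j < i), b j with hSb
  have hkg : Lg + g i * s i + (∑ j ∈ univ.filter (fun j => i < j), g j * s j) = k := by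
    rw [← hg.1]; omega
  have hkb : Lb + b i * s i + (∑ j ∈ univ.filter (fun j => i < j), b j * s j) = k := by
    rw [← hb]; omega
  have hval : Lb + b i * s i = Lg + g i * s i := by omega
  obtain ⟨c, hc⟩ : ∃ c, g i = b i + c + 1 := ⟨g i - b i - 1, by omega⟩
  have hmul : g i * s i = b i * s i + (c + 1) * s i := by rw [hc]; ring
  have heq : Lb = Lg + (c + 1) * s i := by omega
  have hDge : s i ≤ (c + 1) * s i := Nat.le_mul_of_pos_left _ (by omega)
  suffices hmain : Sg + (c + 1) ≤ Sb by omega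
  rcases Nat.lt_or_ge (i : ℕ) 2 with hilt | hige
  · rcases Nat.lt_or_ge (i : ℕ) 1 with hi0 | hi1
    · have hfil : univ.filter (fun j => j < i) = ∅ := by
        apply Finset.filter_eq_empty_iff.mpr
        intro j _
        rw [Fin.lt_def]
        omega
      have hLb0 : Lb = 0 := by rw [hLb, hfil, Finset.sum_empty]
      have := hs0 i
      omega
    · have hfil : univ.filter (fun j => j < i) = {i0} := by
        ext j
        simp only [mem_filter, mem_univ, true_and, mem_singleton, Fin.lt_def, Fin.ext_iff]
        omega
      have hLbeq : Lb = b i0 * s i0 := by rw [hLb, hfil, Finset.sum_singleton]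
      have hLgeq : Lg = g i0 * s i0 := by rw [hLg, hfil, Finset.sum_singleton]
      have hSbeq : Sb = b i0 := by rw [hSb, hfil, Finset.sum_singleton]
      have hSgeq : Sg = g i0 := by rw [hSg, hfil, Finset.sum_singleton]
      have hsii : s i0 < s i := hmono (by simp [Fin.lt_def, h0]; omega)
      have hx : g i0 ≤ b i0 := by
        have hmm : g i0 * s i0 ≤ b i0 * s i0 := by omega
        exact Nat.le_of_mul_le_mul_right hmm (by omega)
      obtain ⟨u, hu⟩ : ∃ u, b i0 = g i0 + u := ⟨b i0 - g i0, by omega⟩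
      have hbexp : b i0 * s i0 = g i0 * s i0 + u * s i0 := by rw [hu]; ring
      have huu : u * s i0 = (c + 1) * s i := by omega
      by_contra hcon
      have hule : u ≤ c := by omega
      have h3 : u * s i0 ≤ c * s i0 := Nat.mul_le_mul_right _ hule
      have h4 : (c + 1) * (s i0 + 1) ≤ (c + 1) * s i := Nat.mul_le_mul_left _ (by omega)
      have h5 : (c + 1) * (s i0 + 1) = c * s i0 + s i0 + c + 1 := by ring
      omega
  · have hi2le : s i2 ≤ s i := hmono.monotone (by simp [Fin.le_def, h2]; omega)
    have hc0 : c = 0 := by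
      by_contra hcne
      have h2si : 2 * s i ≤ (c + 1) * s i := Nat.mul_le_mul_right _ (by omega)
      omega
    subst hc0
    have h1s : (0 + 1) * s i = s i := by ring
    have hSgLg : Sg * s i0 ≤ Lg := by
      rw [hSg, hLg, Finset.sum_mul]
      exact Finset.sum_le_sum (fun j _ => Nat.mul_le_mul_left _ (hs0 j))
    have hSble : Lb ≤ Sb * (s i - 1) := by
      rw [hSb, hLb, Finset.sum_mul]
      refine Finset.sum_le_sum (fun j hj => ?_)
      have hji : j < i := (mem_filter.mp hj).2
      have := hmono hji
      exact Nat.mul_le_mul_left _ (by omega)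
    have hSg1 : Sg ≤ 1 := by
      by_contra hcon
      have : 2 * s i0 ≤ Sg * s i0 := Nat.mul_le_mul_right _ (by omega)
      omega
    by_contra hcon
    have hSb1 : Sb ≤ 1 := by omega
    have : Sb * (s i - 1) ≤ 1 * (s i - 1) := Nat.mul_le_mul_right _ hSb1
    omega

/-- There is no counterexample below `s₃ + s₁ + 2`: every representable `k` with
`0 < k < s₃ + s₁ + 2` satisfies `MinCost_S(k) = GreedyCost_S(k)`. -/
theorem no_counterexample_below_lower_bound {t : ℕ} (ht : 3 ≤ t)
    (s : Fin t → ℕ) (hmono : StrictMono s) (hone : 1 < s ⟨0, by omega⟩)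
    (hgcd : Finset.univ.gcd s = 1)
    (k : ℕ) (hk : 0 < k) (hlt : k < s ⟨2, by omega⟩ + s ⟨0, by omega⟩ + 2)
    (hrep : Representable s k) :
    minCost s k = greedyCost s k := by
  have h0t : 0 < t := by omega
  have h1t : 1 < t := by omega
  have h2t : 2 < t := by omega
  have hs : ∀ i, 0 < s i := fun i =>
    lt_trans Nat.zero_lt_one (lt_of_lt_of_le hone (hmono.monotone (by simp [Fin.le_def])))
  obtain ⟨g0, hg0⟩ := aux_exists_greedyRep s hs hrep
  have hGne : {c | ∃ a, IsGreedyRep s k a ∧ ∑ i, a i = c}.Nonempty := ⟨_, g0, hg0, rfl⟩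
  obtain ⟨g, hg, hgc⟩ := Nat.sInf_mem hGne
  obtain ⟨a0, ha0⟩ := hrep
  have hMne : {c | ∃ a, IsRep s k a ∧ ∑ i, a i = c}.Nonempty := ⟨_, a0, ha0, rfl⟩
  obtain ⟨m, hm, hmc⟩ := Nat.sInf_mem hMne
  have hle : ∑ i, g i ≤ ∑ i, m i :=
    aux_greedy_le_of_rep s hmono ⟨0, h0t⟩ ⟨1, h1t⟩ ⟨2, h2t⟩ rfl rfl rfl hone hlt hg hm
  apply le_antisymm
  · calc minCost s k ≤ ∑ i, g i := Nat.sInf_le ⟨g, hg.1, rfl⟩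
      _ = greedyCost s k := hgc
  · calc greedyCost s k = ∑ i, g i := hgc.symm
      _ ≤ ∑ i, m i := hle
      _ = minCost s k := hmc
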